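/- Let D ⊆ ℂ be open, u : ℂ → ℂ continuous on D, and let ψ, ψ⁺ : ℂ → ℂ be real-differentiable on D with ∂_z̄ ψ = u·conj(ψ) and ∂_z̄ ψ⁺ = −conj(u)·conj(ψ⁺) on D. Assume moreover that ψ and ψ⁺ are real-differentiable of class C¹ on D. Then at every point of D one has ∂_z̄(ψ·ψ⁺) + ∂_z(conj(ψ·ψ⁺)) = 0, i.e. the real 1-form ψψ⁺ dz − conj(ψψ⁺) dz̄ is closed on D. -/

import Mathlib

open Complex

/-- The Wirtinger derivative ∂_z̄ f(z) = (1/2)((fderiv ℝ f z) 1 + i·((fderiv ℝ f z) i)). -/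
noncomputable def dzbar (f : ℂ → ℂ) (z : ℂ) : ℂ :=
  (1 / 2 : ℂ) * ((fderiv ℝ f z) 1 + Complex.I * (fderiv ℝ f z) Complex.I)

/-- The Wirtinger derivative ∂_z f(z) = (1/2)((fderiv ℝ f z) 1 − i·((fderiv ℝ f z) i)). -/
noncomputable def dz (f : ℂ → ℂ) (z : ℂ) : ℂ :=
  (1 / 2 : ℂ) * ((fderiv ℝ f z) 1 - Complex.I * (fderiv ℝ f z) Complex.I)

/-- if ∂_z̄ ψ = u·conj ψ and ∂_z̄ ψ⁺ = −conj u·conj ψ⁺ on an open D with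
ψ, ψ⁺ of class C¹ and u continuous, then ∂_z̄(ψψ⁺) + ∂_z(conj(ψψ⁺)) = 0 on D. -/
lemma fderiv_conj_apply (f : ℂ → ℂ) (z : ℂ) (hf : DifferentiableAt ℝ f z) (v : ℂ) :
    (fderiv ℝ (fun w => (starRingEnd ℂ) (f w)) z) v = (starRingEnd ℂ) ((fderiv ℝ f z) v) := by
  have h := (Complex.conjCLE.toContinuousLinearMap.hasFDerivAt.comp z hf.hasFDerivAt).fderiv
  have : (fun w => (starRingEnd ℂ) (f w)) = Complex.conjCLE.toContinuousLinearMap ∘ f := rfl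
  rw [this, h]
  rfl

lemma dz_conj (f : ℂ → ℂ) (z : ℂ) (hf : DifferentiableAt ℝ f z) :
    dz (fun w => (starRingEnd ℂ) (f w)) z = (starRingEnd ℂ) (dzbar f z) := by
  simp only [dz, dzbar, fderiv_conj_apply f z hf, map_mul, map_add]
  simp [Complex.conj_I, map_ofNat]
  ring

lemma dzbar_mul (f g : ℂ → ℂ) (z : ℂ) (hf : DifferentiableAt ℝ f z)
    (hg : DifferentiableAt ℝ g z) :
    dzbar (fun w => f w * g w) z = f z * dzbar g z + g z * dzbar f z := by
  simp only [dzbar, fderiv_fun_mul hf hg, ContinuousLinearMap.add_apply,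
    ContinuousLinearMap.smul_apply, smul_eq_mul]
  ring

theorem statement0 (D : Set ℂ) (hD : IsOpen D) (u ψ ψp : ℂ → ℂ)
    (hu : ContinuousOn u D)
    (hψ : ∀ z ∈ D, DifferentiableAt ℝ ψ z)
    (hψp : ∀ z ∈ D, DifferentiableAt ℝ ψp z)
    (hψC1 : ContDiffOn ℝ 1 ψ D) (hψpC1 : ContDiffOn ℝ 1 ψp D)
    (heq1 : ∀ z ∈ D, dzbar ψ z = u z * (starRingEnd ℂ) (ψ z))
    (heq2 : ∀ z ∈ D, dzbar ψp z = -(starRingEnd ℂ) (u z) * (starRingEnd ℂ) (ψp z)) :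
    ∀ z ∈ D,
      dzbar (fun w => ψ w * ψp w) z
        + dz (fun w => (starRingEnd ℂ) (ψ w * ψp w)) z = 0 := by
  intro z hz
  have h1 := hψ z hz
  have h2 := hψp z hz
  rw [dz_conj (fun w => ψ w * ψp w) z (h1.mul h2), dzbar_mul _ _ z h1 h2, heq1 z hz, heq2 z hz]
  simp only [map_add, map_mul, map_neg, Complex.conj_conj]
  ring
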